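/- With F as in the previous context, for each index i the 2×2 Hessian block M_i satisfies: the Schur complement K_i - B_i²/A_i equals (cw/(θ_{0i} - k_i c w)) · (cw - θ_{0i}/k_i), which is strictly negative whenever θ_{0i} > k_i c w > 0. Consequently the full Hessian of F (with respect to the 2d variables, block-diagonal across indices i) is not positive semidefinite at any interior point. -/

import Mathlib

open Real Matrix

theorem map_F_hessian_not_posSemidef (c w θ k : ℝ) (hc : 0 < c) (hw : 0 < w)
    (hk : 0 < k) (hdom : k * c * w < θ) :
    (c ^ 2 * w ^ 2 / (θ - k * c * w)
        - (-(c * w) / (θ - k * c * w)) ^ 2 / (1 / (θ - k * c * w) - 1 / θ)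
      = (c * w / (θ - k * c * w)) * (c * w - θ / k)) ∧
    ((c * w / (θ - k * c * w)) * (c * w - θ / k) < 0) ∧
    ¬ (Matrix.of !![1 / (θ - k * c * w) - 1 / θ, -(c * w) / (θ - k * c * w);
        -(c * w) / (θ - k * c * w), c ^ 2 * w ^ 2 / (θ - k * c * w)]).PosSemidef := by
  have hkcw : 0 < k * c * w := by positivity
  have hθ : 0 < θ := hkcw.trans hdom
  have hd : 0 < θ - k * c * w := sub_pos.mpr hdom
  have hA : 0 < 1 / (θ - k * c * w) - 1 / θ := by
    rw [sub_pos]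
    exact one_div_lt_one_div_of_lt hd (by linarith)
  refine ⟨?_, ?_, ?_⟩
  · have hA' := hA.ne'
    rw [show 1 / (θ - k * c * w) - 1 / θ = k * c * w / ((θ - k * c * w) * θ) by
      field_simp; ring]
    field_simp
  · apply mul_neg_of_pos_of_neg
    · positivity
    · rw [sub_neg, lt_div_iff₀ hk]
      linarith [hdom]
  · intro hps
    set A := 1 / (θ - k * c * w) - 1 / θ with hAdef
    set B := -(c * w) / (θ - k * c * w) with hBdef
    set K := c ^ 2 * w ^ 2 / (θ - k * c * w) with hKdef
    have hq := hps.dotProduct_mulVec_nonneg ![-B, A]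
    have hdot : star ![-B, A] ⬝ᵥ
        (Matrix.of !![A, B; B, K]) *ᵥ ![-B, A]
        = A * (A * K - B * B) := by
      have e : ∀ i j, (Matrix.of !![A, B; B, K]) i j = !![A, B; B, K] i j := fun _ _ => rfl
      simp [e, dotProduct, Matrix.mulVec, Matrix.of_apply, Fin.sum_univ_two]
      ring
    rw [hdot] at hq
    have hdet : A * K - B * B = -(c ^ 2 * w ^ 2) / ((θ - k * c * w) * θ) := by
      rw [hAdef, hBdef, hKdef]
      field_simp
      ring
    have hneg : A * (A * K - B * B) < 0 := by
      rw [hdet]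
      apply mul_neg_of_pos_of_neg hA
      apply div_neg_of_neg_of_pos
      · have : 0 < c ^ 2 * w ^ 2 := by positivity
        linarith
      · positivity
    linarith
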